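/- Let a ∈ ℝⁿ₊₊ and suppose x ∈ [−1,1]ⁿ. Fix i = n and write bⱼ = xⱼ² − 1 ≤ 0. Then sup over γ ∈ N_n of ⟨γ, b⟩ equals ( a_n√(−b_n) − ∑_{j<n} aⱼ√(−bⱼ) )₊², where N_n = {γ ∈ ℝⁿ : 0 > γ_n ≥ −a_n²/(1 + ∑_{j<n} aⱼ²/γⱼ), γⱼ > 0 ∀ j < n}. -/

import Mathlib

open Finset Filter Topology

set_option maxHeartbeats 1000000

/-- Partition sup calculation (Lemma A.2). With a ∈ ℝ^{n+1}₊₊, x ∈ [−1,1]^{n+1},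
bⱼ = xⱼ² − 1 and i₀ the last index, the supremum over γ ∈ N_{i₀} of ⟨γ, b⟩ equals
( a_{i₀}√(−b_{i₀}) − ∑_{j≠i₀} aⱼ√(−bⱼ) )₊². -/
theorem stmt_10 (n : ℕ) (hn : 1 ≤ n) (a : Fin (n + 1) → ℝ) (ha : ∀ i, 0 < a i)
    (x : Fin (n + 1) → ℝ) (hx : ∀ i, x i ∈ Set.Icc (-1 : ℝ) 1)
    (b : Fin (n + 1) → ℝ) (hb : ∀ j, b j = x j ^ 2 - 1) :
    sSup {s : ℝ | ∃ γ : Fin (n + 1) → ℝ,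
        (∀ j, j ≠ Fin.last n → 0 < γ j) ∧
        γ (Fin.last n) < 0 ∧
        γ (Fin.last n) ≥
          -(a (Fin.last n)) ^ 2 / (1 + ∑ j ∈ univ.erase (Fin.last n), (a j) ^ 2 / γ j) ∧
        s = ∑ j, γ j * b j} =
      (max (a (Fin.last n) * Real.sqrt (-(b (Fin.last n))) -
        ∑ j ∈ univ.erase (Fin.last n), a j * Real.sqrt (-(b j))) 0) ^ 2 := by
  classical
  set i₀ := Fin.last n with hi₀
  set E : Finset (Fin (n+1)) := univ.erase i₀ with hEdef
  have hEne : E.Nonempty := ⟨0, by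
    simp only [hEdef, mem_erase, mem_univ, and_true]
    simp [hi₀, Fin.ext_iff]; omega⟩
  set β : Fin (n+1) → ℝ := fun j => 1 - x j ^ 2 with hβdef
  have hβ : ∀ j, 0 ≤ β j := by
    intro j
    have h := hx j
    simp only [Set.mem_Icc] at h
    simp only [hβdef]
    nlinarith [h.1, h.2]
  have hbβ : ∀ j, b j = -β j := fun j => by simp [hβdef, hb j]; try ring
  set A := ∑ j ∈ E, a j * Real.sqrt (β j) with hAdef
  set c := a i₀ * Real.sqrt (β i₀) with hcdef
  set t := max (c - A) 0 with htdef
  have hA0 : 0 ≤ A := sum_nonneg fun j _ => mul_nonneg (ha j).le (Real.sqrt_nonneg _)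
  have hc0 : 0 ≤ c := mul_nonneg (ha i₀).le (Real.sqrt_nonneg _)
  have ht0 : 0 ≤ t := le_max_right _ _
  have hc2 : c ^ 2 = a i₀ ^ 2 * β i₀ := by
    rw [hcdef, mul_pow, Real.sq_sqrt (hβ i₀)]
  have hub : ∀ γ : Fin (n + 1) → ℝ,
      (∀ j, j ≠ i₀ → 0 < γ j) → γ i₀ < 0 →
      γ i₀ ≥ -(a i₀) ^ 2 / (1 + ∑ j ∈ E, (a j) ^ 2 / γ j) →
      ∑ j, γ j * b j ≤ t ^ 2 := by
    intro γ h1 h2 h3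
    set S := ∑ j ∈ E, a j ^ 2 / γ j with hSdef
    have hγpos : ∀ j ∈ E, 0 < γ j := fun j hj => h1 j (Finset.ne_of_mem_erase hj)
    have hSpos : 0 < S := Finset.sum_pos (fun j hj => div_pos (pow_pos (ha j) 2) (hγpos j hj)) hEne
    set B := ∑ j ∈ E, γ j * β j with hBdef
    have hB0 : 0 ≤ B := sum_nonneg fun j hj => mul_nonneg (hγpos j hj).le (hβ j)
    have hCS : A ^ 2 ≤ S * B := by
      have h := Finset.sum_mul_sq_le_sq_mul_sq E (fun j => a j / Real.sqrt (γ j))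
        (fun j => Real.sqrt (γ j) * Real.sqrt (β j))
      have e1 : ∑ j ∈ E, (a j / Real.sqrt (γ j)) * (Real.sqrt (γ j) * Real.sqrt (β j)) = A := by
        refine sum_congr rfl fun j hj => ?_
        have hs : Real.sqrt (γ j) ≠ 0 := (Real.sqrt_pos.2 (hγpos j hj)).ne'
        field_simp
      have e2 : ∑ j ∈ E, (a j / Real.sqrt (γ j)) ^ 2 = S := by
        refine sum_congr rfl fun j hj => ?_
        rw [div_pow, Real.sq_sqrt (hγpos j hj).le]
      have e3 : ∑ j ∈ E, (Real.sqrt (γ j) * Real.sqrt (β j)) ^ 2 = B := by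
        refine sum_congr rfl fun j hj => ?_
        rw [mul_pow, Real.sq_sqrt (hγpos j hj).le, Real.sq_sqrt (hβ j)]
      rwa [e1, e2, e3] at h
    have hsplit : ∑ j, γ j * b j = -B + γ i₀ * b i₀ := by
      rw [← Finset.sum_erase_add univ _ (mem_univ i₀)]
      congr 1
      rw [hBdef, ← Finset.sum_neg_distrib]
      exact sum_congr rfl fun j _ => by rw [hbβ j]; ring
    have h1S : 0 < 1 + S := by linarith
    have hlast : γ i₀ * b i₀ ≤ a i₀ ^ 2 * β i₀ / (1 + S) := by
      have hbi : b i₀ ≤ 0 := by rw [hbβ i₀]; linarith [hβ i₀]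
      calc γ i₀ * b i₀ ≤ (-(a i₀) ^ 2 / (1 + S)) * b i₀ := mul_le_mul_of_nonpos_right h3 hbi
        _ = a i₀ ^ 2 * β i₀ / (1 + S) := by rw [hbβ i₀]; ring
    have key : a i₀ ^ 2 * β i₀ ≤ (t ^ 2 + B) * (1 + S) := by
      rw [← hc2]
      rcases le_or_gt c A with hca | hca
      · have ht' : t = 0 := max_eq_right (by linarith)
        rw [ht']
        nlinarith [hCS, pow_le_pow_left₀ hc0 hca 2, hB0, hSpos]
      · have ht' : t = c - A := max_eq_left (by linarith)
        rw [ht']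
        nlinarith [hCS, sq_nonneg (S * (c - A) - A), hSpos, hB0,
          mul_nonneg hSpos.le (sub_nonneg.2 hCS)]
    rw [hsplit]
    have : a i₀ ^ 2 * β i₀ / (1 + S) ≤ t ^ 2 + B := by
      rw [div_le_iff₀ h1S]; exact key
    linarith
  set Q : ℝ → ℝ := fun δ => ∑ j ∈ E, a j * Real.sqrt (β j + δ ^ 2) with hQdef
  set P : ℝ → ℝ := fun δ => ∑ j ∈ E, a j * β j / Real.sqrt (β j + δ ^ 2) with hPdef
  set F : ℝ → ℝ := fun δ =>
      -((t + δ) * P δ) + a i₀ ^ 2 * β i₀ * (t + δ) / ((t + δ) + Q δ) with hFdef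
  have hwit : ∀ δ : ℝ, 0 < δ → ∃ γ : Fin (n+1) → ℝ,
      (∀ j, j ≠ i₀ → 0 < γ j) ∧ γ i₀ < 0 ∧
      γ i₀ ≥ -(a i₀) ^ 2 / (1 + ∑ j ∈ E, (a j) ^ 2 / γ j) ∧
      F δ = ∑ j, γ j * b j := by
    intro δ hδ
    have htδ : 0 < t + δ := by linarith
    have hsq : ∀ j, 0 < Real.sqrt (β j + δ ^ 2) := fun j =>
      Real.sqrt_pos.2 (by nlinarith [hβ j])
    set γ : Fin (n+1) → ℝ := fun j =>
      if j = i₀ then -(a i₀) ^ 2 / (1 + Q δ / (t + δ))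
      else a j * (t + δ) / Real.sqrt (β j + δ ^ 2) with hγdef
    have hγj : ∀ j, j ≠ i₀ → γ j = a j * (t + δ) / Real.sqrt (β j + δ ^ 2) := by
      intro j hj; simp [hγdef, hj]
    have hγi : γ i₀ = -(a i₀) ^ 2 / (1 + Q δ / (t + δ)) := by simp [hγdef]
    have hQ0 : 0 ≤ Q δ := sum_nonneg fun j _ => mul_nonneg (ha j).le (Real.sqrt_nonneg _)
    have hden : 0 < 1 + Q δ / (t + δ) := by positivity
    have hpos : ∀ j, j ≠ i₀ → 0 < γ j := by
      intro j hj
      rw [hγj j hj]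
      exact div_pos (mul_pos (ha j) htδ) (hsq j)
    have hSQ : ∑ j ∈ E, (a j) ^ 2 / γ j = Q δ / (t + δ) := by
      rw [hQdef]
      simp only
      rw [Finset.sum_div]
      refine sum_congr rfl fun j hj => ?_
      rw [hγj j (Finset.ne_of_mem_erase hj)]
      rw [div_div_eq_mul_div]
      rw [div_eq_div_iff (mul_pos (ha j) htδ).ne' htδ.ne']
      ring
    refine ⟨γ, hpos, ?_, ?_, ?_⟩
    · rw [hγi]
      exact div_neg_of_neg_of_pos (neg_lt_zero.2 (pow_pos (ha i₀) 2)) hden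
    · rw [hSQ, hγi]
    · rw [← Finset.sum_erase_add univ _ (mem_univ i₀)]
      have e1 : ∑ j ∈ E, γ j * b j = -((t + δ) * P δ) := by
        rw [hPdef]
        simp only
        rw [Finset.mul_sum, ← Finset.sum_neg_distrib]
        refine sum_congr rfl fun j hj => ?_
        rw [hγj j (Finset.ne_of_mem_erase hj), hbβ j]
        ring
      have e2 : γ i₀ * b i₀ = a i₀ ^ 2 * β i₀ * (t + δ) / ((t + δ) + Q δ) := by
        rw [hγi, hbβ i₀]
        have h2 : 1 + Q δ / (t + δ) = ((t + δ) + Q δ) / (t + δ) := by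
          field_simp
        rw [h2]
        rw [div_div_eq_mul_div]
        have hd2 : (0:ℝ) < (t + δ) + Q δ := by linarith
        field_simp
      rw [e1, e2, hFdef]
  have hQt : Tendsto Q (𝓝 0) (𝓝 A) := by
    rw [hQdef, hAdef]
    apply tendsto_finset_sum
    intro j _
    have hcont : Continuous fun δ : ℝ => a j * Real.sqrt (β j + δ ^ 2) :=
      continuous_const.mul (Real.continuous_sqrt.comp (continuous_const.add (continuous_pow 2)))
    have := hcont.tendsto 0
    simpa using this
  have hPt : Tendsto P (𝓝 0) (𝓝 A) := by
    rw [hPdef, hAdef]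
    apply tendsto_finset_sum
    intro j _
    rcases eq_or_lt_of_le (hβ j) with h0 | h0
    · have : (fun δ : ℝ => a j * β j / Real.sqrt (β j + δ ^ 2)) = fun _ => 0 := by
        funext δ; rw [← h0]; simp
      rw [this, ← h0]
      simpa using tendsto_const_nhds
    · have hden : Real.sqrt (β j) ≠ 0 := (Real.sqrt_pos.2 h0).ne'
      have hcont : Tendsto (fun δ : ℝ => a j * β j / Real.sqrt (β j + δ ^ 2)) (𝓝 0)
          (𝓝 (a j * β j / Real.sqrt (β j))) := by
        apply Tendsto.div tendsto_const_nhds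
        · have hc2' : Continuous fun δ : ℝ => Real.sqrt (β j + δ ^ 2) :=
            Real.continuous_sqrt.comp (continuous_const.add (continuous_pow 2))
          simpa using hc2'.tendsto 0
        · exact hden
      have : a j * β j / Real.sqrt (β j) = a j * Real.sqrt (β j) := by
        rw [mul_div_assoc, Real.div_sqrt]
      rwa [this] at hcont
  have hFt : Tendsto F (𝓝[>] (0:ℝ)) (𝓝 (t ^ 2)) := by
    rcases eq_or_lt_of_le (by linarith : (0:ℝ) ≤ t + A) with hta | hta
    · -- t = 0, A = 0, everything degenerate
      have hA' : A = 0 := by linarith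
      have ht' : t = 0 := by linarith
      have hsum0 : ∑ j ∈ E, a j * Real.sqrt (β j) = 0 := by rw [← hAdef]; exact hA'
      have hβE : ∀ j ∈ E, β j = 0 := by
        intro j hj
        have := (Finset.sum_eq_zero_iff_of_nonneg
          (fun j _ => mul_nonneg (ha j).le (Real.sqrt_nonneg (β j)))).1 hsum0 j hj
        have hsq0 : Real.sqrt (β j) = 0 := by
          rcases mul_eq_zero.1 this with h | h
          · exact absurd h (ha j).ne'
          · exact h
        have := Real.sqrt_eq_zero (hβ j) |>.1 hsq0
        exact this
      have hc' : c = 0 := by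
        by_contra hcne
        have : 0 < c := lt_of_le_of_ne hc0 (Ne.symm hcne)
        have h2 : 0 < t := by
          rw [htdef, hA', sub_zero]
          exact lt_max_iff.mpr (Or.inl this)
        linarith
      have hβi : a i₀ ^ 2 * β i₀ = 0 := by rw [← hc2, hc', zero_pow]; norm_num
      have hF0 : ∀ δ : ℝ, F δ = 0 := by
        intro δ
        have hP0 : P δ = 0 := by
          rw [hPdef]
          exact Finset.sum_eq_zero fun j hj => by rw [hβE j hj]; simp
        show -((t + δ) * P δ) + a i₀ ^ 2 * β i₀ * (t + δ) / ((t + δ) + Q δ) = 0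
        rw [hP0, hβi]
        ring
      rw [ht']
      have : Tendsto (fun _ : ℝ => (0:ℝ)) (𝓝[>] (0:ℝ)) (𝓝 ((0:ℝ) ^ 2)) := by
        simpa using tendsto_const_nhds
      exact Tendsto.congr (fun δ => (hF0 δ).symm) this
    · have hlim : Tendsto F (𝓝 0) (𝓝 (-(t * A) + a i₀ ^ 2 * β i₀ * t / (t + A))) := by
        rw [hFdef]
        have h1 : Tendsto (fun δ : ℝ => t + δ) (𝓝 0) (𝓝 t) := by
          have h := (tendsto_const_nhds (x := t)).add (tendsto_id (x := 𝓝 (0:ℝ))); rw [add_zero] at h; exact h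
        apply Tendsto.add
        · exact (h1.mul hPt).neg
        · apply Tendsto.div (tendsto_const_nhds.mul h1) (h1.add hQt) hta.ne'
      have hval : -(t * A) + a i₀ ^ 2 * β i₀ * t / (t + A) = t ^ 2 := by
        rw [← hc2]
        rcases le_or_gt c A with hca | hca
        · have ht' : t = 0 := max_eq_right (by linarith)
          rw [ht']; simp
        · have ht' : t = c - A := max_eq_left (by linarith)
          have hceq : t + A = c := by rw [ht']; ring
          rw [hceq]
          have hcpos : c ≠ 0 := by rw [← hceq]; exact hta.ne'
          have hdiv : c ^ 2 * t / c = c * t := by field_simp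
          rw [hdiv]
          linear_combination (-t) * ht'
      rw [← hval]
      exact hlim.mono_left nhdsWithin_le_nhds
  have hRHS : (max (a i₀ * Real.sqrt (-(b i₀)) - ∑ j ∈ E, a j * Real.sqrt (-(b j))) 0) ^ 2
      = t ^ 2 := by
    have e : ∀ j, -b j = β j := fun j => by rw [hbβ j]; ring
    simp only [e]
    try rw [htdef]
    try rw [hcdef]
    try rw [hAdef]
  rw [hRHS]
  apply le_antisymm
  · exact Real.sSup_le (by rintro s ⟨γ, h1, h2, h3, rfl⟩; exact hub γ h1 h2 h3) (sq_nonneg t)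
  · refine le_of_tendsto hFt ?_
    filter_upwards [self_mem_nhdsWithin] with δ hδ
    obtain ⟨γ, hg1, hg2, hg3, hg4⟩ := hwit δ hδ
    refine le_csSup ⟨t ^ 2, ?_⟩ ⟨γ, hg1, hg2, hg3, hg4⟩
    rintro s ⟨γ', k1, k2, k3, rfl⟩
    exact hub γ' k1 k2 k3
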